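/- arXiv:1906.05905 — 3 statements merged into one kernel-verified Lean document; each statement's English description precedes it below -/
import Mathlib

section
/- Let H be a Hilbert space and ρ a positive injective trace-class operator. Then the range of the map i_ρ(x) = ρ^{1/4} x ρ^{1/4}, for x ranging over B(H), is dense in the Hilbert space S₂(H) of Hilbert-Schmidt operators. -/
set_option synthInstance.maxHeartbeats 1000000
set_option maxHeartbeats 1000000

open scoped InnerProductSpace ComplexOrder NNReal ENNReal

section IRhoAux

variable {ι H : Type*} [NormedAddCommGroup H] [InnerProductSpace ℂ H] [CompleteSpace H]

private lemma rpow_two_eq' (x : ℝ) : x ^ ((2 : ℝ≥0∞).toReal) = x ^ 2 := by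
  rw [show ((2 : ℝ≥0∞).toReal) = ((2 : ℕ) : ℝ) by norm_num, Real.rpow_natCast]

private lemma memℓp_two_iff (f : ι → H) :
    Memℓp f 2 ↔ Summable fun i => ‖f i‖ ^ 2 := by
  rw [memℓp_gen_iff (by norm_num : (0:ℝ) < (2 : ℝ≥0∞).toReal)]
  simp_rw [rpow_two_eq']

private lemma sqrt_tsum_eq_norm (f : lp (fun _ : ι => H) 2) :
    Real.sqrt (∑' i, ‖f i‖ ^ 2) = ‖f‖ := by
  rw [lp.norm_eq_tsum_rpow (by norm_num) f, Real.sqrt_eq_rpow]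
  simp_rw [rpow_two_eq']
  norm_num

/-- rank one operator `w ↦ ⟪v, w⟫ • u`. -/
private noncomputable def rk (u v : H) : H →L[ℂ] H := (innerSL ℂ v).smulRight u

private lemma rk_apply (u v w : H) : rk u v w = ⟪v, w⟫_ℂ • u := rfl

private lemma rk_norm_sq (b : HilbertBasis ι ℂ H) (u v : H) (i : ι) :
    ‖rk u v (b i)‖ ^ 2 = ‖u‖ ^ 2 * ‖b.repr v i‖ ^ 2 := by
  rw [rk_apply, norm_smul, b.repr_apply_apply, ← norm_inner_symm v (b i), mul_pow, mul_comm]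

private lemma repr_tsum_sq (b : HilbertBasis ι ℂ H) (v : H) :
    ∑' i, ‖b.repr v i‖ ^ 2 = ‖v‖ ^ 2 := by
  have h := lp.norm_rpow_eq_tsum (p := 2) (by norm_num) (b.repr v)
  simp_rw [rpow_two_eq'] at h
  rw [← h, b.repr.norm_map]

private lemma repr_summable_sq (b : HilbertBasis ι ℂ H) (v : H) :
    Summable fun i => ‖b.repr v i‖ ^ 2 := by
  have h := (lp.memℓp (b.repr v)).summable (by norm_num : (0:ℝ) < (2 : ℝ≥0∞).toReal)
  simpa [rpow_two_eq'] using h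

private lemma rk_memℓp (b : HilbertBasis ι ℂ H) (u v : H) :
    Memℓp (fun i => rk u v (b i)) 2 := by
  rw [memℓp_two_iff]
  exact (((repr_summable_sq b v).mul_left (‖u‖ ^ 2)).congr
    fun i => (rk_norm_sq b u v i).symm)

/-- rank one operator as an element of `ℓ²(ι, H)` via the basis `b`. -/
private noncomputable def rkL2 (b : HilbertBasis ι ℂ H) (u v : H) :
    lp (fun _ : ι => H) 2 := ⟨fun i => rk u v (b i), rk_memℓp b u v⟩

private lemma rkL2_apply (b : HilbertBasis ι ℂ H) (u v : H) (i : ι) :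
    rkL2 b u v i = rk u v (b i) := rfl

private lemma rkL2_norm (b : HilbertBasis ι ℂ H) (u v : H) :
    ‖rkL2 b u v‖ = ‖u‖ * ‖v‖ := by
  have h1 : ‖rkL2 b u v‖ ^ 2 = ∑' i, ‖rk u v (b i)‖ ^ 2 := by
    have h := lp.norm_rpow_eq_tsum (p := 2) (by norm_num) (rkL2 b u v)
    simpa [rpow_two_eq', rkL2_apply] using h
  have h2 : ∑' i, ‖rk u v (b i)‖ ^ 2 = ‖u‖ ^ 2 * ‖v‖ ^ 2 := by
    calc ∑' i, ‖rk u v (b i)‖ ^ 2 = ∑' i, ‖u‖ ^ 2 * ‖b.repr v i‖ ^ 2 :=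
          tsum_congr fun i => rk_norm_sq b u v i
      _ = ‖u‖ ^ 2 * ∑' i, ‖b.repr v i‖ ^ 2 := tsum_mul_left
      _ = ‖u‖ ^ 2 * ‖v‖ ^ 2 := by rw [repr_tsum_sq]
  calc ‖rkL2 b u v‖ = Real.sqrt (‖rkL2 b u v‖ ^ 2) := (Real.sqrt_sq (norm_nonneg _)).symm
    _ = Real.sqrt ((‖u‖ * ‖v‖) ^ 2) := by rw [h1, h2, mul_pow]
    _ = ‖u‖ * ‖v‖ := Real.sqrt_sq (by positivity)

private lemma rkL2_sub (b : HilbertBasis ι ℂ H) (u u' v v' : H) :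
    rkL2 b u v - rkL2 b u' v' = rkL2 b (u - u') v + rkL2 b u' (v - v') := by
  apply lp.ext
  rw [lp.coeFn_sub, lp.coeFn_add]
  funext i
  simp only [Pi.sub_apply, Pi.add_apply, rkL2_apply, rk_apply, inner_sub_left, sub_smul,
    smul_sub]
  abel

end IRhoAux

/-- Let `H` be a Hilbert space and `ρ` a positive injective trace-class operator.
The range of `i_ρ(x) = ρ^{1/4} x ρ^{1/4}`, for `x` ranging over `B(H)`, is dense in
the Hilbert space `S₂(H)` of Hilbert-Schmidt operators: every Hilbert-Schmidt `y`
is approximated in Hilbert-Schmidt norm by elements `i_ρ(x)`. -/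
theorem iRho_denseRange_S2
    {ι H : Type*} [NormedAddCommGroup H] [InnerProductSpace ℂ H] [CompleteSpace H]
    (b : HilbertBasis ι ℂ H) (ρ : H →L[ℂ] H) (hρpos : 0 ≤ ρ)
    (htc : Summable fun i => ⟪b i, ρ (b i)⟫_ℂ)
    (hinj : Function.Injective ρ)
    (y : H →L[ℂ] H) (hy : Summable fun i => ‖y (b i)‖ ^ 2)
    (ε : ℝ) (hε : 0 < ε) :
    ∃ x : H →L[ℂ] H,
      (Summable fun i => ‖(y - CFC.nnrpow ρ (1/4) * x * CFC.nnrpow ρ (1/4)) (b i)‖ ^ 2)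
        ∧ Real.sqrt (∑' i,
            ‖(y - CFC.nnrpow ρ (1/4) * x * CFC.nnrpow ρ (1/4)) (b i)‖ ^ 2) < ε := by
  classical
  set A : H →L[ℂ] H := CFC.nnrpow ρ (1/4) with hA
  -- `A` is nonnegative, hence selfadjoint
  have hAnn : (0 : H →L[ℂ] H) ≤ A := CFC.nnrpow_nonneg
  have hAsa : IsSelfAdjoint A := IsSelfAdjoint.of_nonneg hAnn
  have hAsymm : ∀ u v : H, ⟪A u, v⟫_ℂ = ⟪u, A v⟫_ℂ :=
    ContinuousLinearMap.isSelfAdjoint_iff_isSymmetric.mp hAsa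
  -- `ρ = A * A * (A * A)`
  have h12 : ρ ^ ((1:ℝ≥0)/2) = A * A := by
    have h := CFC.nnrpow_add (a := ρ) (x := 1/4) (y := 1/4) (by norm_num) (by norm_num)
    rw [show (1/4 + 1/4 : ℝ≥0) = 1/2 by rw [← NNReal.coe_inj]; push_cast; norm_num] at h
    exact h
  have hAAAA : A * A * (A * A) = ρ := by
    have h := CFC.nnrpow_add (a := ρ) (x := 1/2) (y := 1/2) (by norm_num) (by norm_num)
    rw [show (1/2 + 1/2 : ℝ≥0) = 1 by rw [← NNReal.coe_inj]; push_cast; norm_num,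
      CFC.nnrpow_one ρ hρpos, h12] at h
    exact h.symm
  -- `A` is injective
  have hAinj : Function.Injective A := by
    intro v w h
    have h0 : A (v - w) = 0 := by rw [map_sub, h, sub_self]
    have hρ0 : ρ (v - w) = 0 := by
      rw [← hAAAA]
      simp only [ContinuousLinearMap.mul_apply, h0, map_zero]
    have := hinj (by rw [hρ0, map_zero] : ρ (v - w) = ρ 0)
    exact sub_eq_zero.mp this
  -- `A` has dense range
  have hdense : DenseRange (A : H → H) := by
    have hker : ∀ v : H, A v = 0 → v = 0 := by
      intro v hv
      exact hAinj (by rw [hv, map_zero])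
    have htop : (LinearMap.range (A : H →ₗ[ℂ] H)).topologicalClosure = ⊤ := by
      rw [Submodule.topologicalClosure_eq_top_iff, Submodule.eq_bot_iff]
      intro v hv
      have hv' : ∀ u : H, ⟪A u, v⟫_ℂ = 0 := fun u =>
        (Submodule.mem_orthogonal _ v).mp hv (A u) (LinearMap.mem_range_self _ u)
      have hAv : A v = 0 := by
        have h := hv' (A v)
        rw [hAsymm] at h
        exact inner_self_eq_zero.mp h
      exact hker v hAv
    have hd : Dense ((LinearMap.range (A : H →ₗ[ℂ] H) : Submodule ℂ H) : Set H) :=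
      Submodule.dense_iff_topologicalClosure_eq_top.mpr htop
    rwa [LinearMap.coe_range] at hd
  have happrox : ∀ (v : H) (δ : ℝ), 0 < δ → ∃ u, ‖A u - v‖ < δ := by
    intro v δ hδ
    obtain ⟨u, hu⟩ := hdense.exists_dist_lt v hδ
    exact ⟨u, by rwa [dist_comm, dist_eq_norm] at hu⟩
  -- choose a finite set `F` capturing most of the Hilbert-Schmidt mass of `y`
  have htail := tendsto_tsum_compl_atTop_zero (fun i => ‖y (b i)‖ ^ 2)
  have hε4 : (0:ℝ) < (ε/4) ^ 2 := by positivity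
  obtain ⟨F, hF⟩ := (htail.eventually (gt_mem_nhds hε4)).exists
  -- hF : ∑' (i : {x // x ∉ F}), ‖y (b i)‖ ^ 2 < (ε/4) ^ 2
  set n : ℝ := (F.card : ℝ) with hn
  have hn0 : (0:ℝ) ≤ n := Nat.cast_nonneg _
  -- tolerances
  set δ : ι → ℝ := fun j => min 1 (ε / (4 * (n+1) * (‖y (b j)‖ + 2))) with hδdef
  have hδpos : ∀ j, 0 < δ j := fun j => by
    have : (0:ℝ) < ε / (4 * (n+1) * (‖y (b j)‖ + 2)) := by positivity
    exact lt_min one_pos this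
  choose u hu using fun j => happrox (y (b j)) (δ j) (hδpos j)
  choose w hw using fun j => happrox (b j) (δ j) (hδpos j)
  -- the approximating operator
  refine ⟨∑ j ∈ F, rk (u j) (w j), ?_⟩
  set x : H →L[ℂ] H := ∑ j ∈ F, rk (u j) (w j) with hx
  -- pointwise formula for `A * x * A`
  have hT : ∀ v : H, (A * x * A) v = ∑ j ∈ F, rk (A (u j)) (A (w j)) v := by
    intro v
    simp only [ContinuousLinearMap.mul_apply, hx, ContinuousLinearMap.sum_apply, map_sum]
    refine Finset.sum_congr rfl fun j _ => ?_
    rw [rk_apply, rk_apply, map_smul, hAsymm]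
  -- orthonormality computation
  have hsum : ∀ i : ι, ∑ j ∈ F, rk (y (b j)) (b j) (b i) =
      if i ∈ F then y (b i) else 0 := by
    intro i
    have horth := orthonormal_iff_ite.mp b.orthonormal
    calc ∑ j ∈ F, rk (y (b j)) (b j) (b i)
        = ∑ j ∈ F, if j = i then y (b j) else 0 := by
          refine Finset.sum_congr rfl fun j _ => ?_
          rw [rk_apply, horth j i]
          split <;> simp
      _ = if i ∈ F then y (b i) else 0 := Finset.sum_ite_eq' F i (fun j => y (b j))
  -- the tail element of ℓ²
  have htmem : Memℓp (fun i => if i ∈ F then (0:H) else y (b i)) 2 := by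
    rw [memℓp_two_iff]
    refine Summable.of_nonneg_of_le (fun i => by positivity) (fun i => ?_) hy
    split <;> simp [sq_nonneg, norm_nonneg, pow_le_pow_left₀, le_refl]
  set t : lp (fun _ : ι => H) 2 := ⟨fun i => if i ∈ F then (0:H) else y (b i), htmem⟩ with ht
  -- the total ℓ² element
  set D : lp (fun _ : ι => H) 2 :=
    t + ∑ j ∈ F, (rkL2 b (y (b j)) (b j) - rkL2 b (A (u j)) (A (w j))) with hD
  have hDfun : (fun i => (y - A * x * A) (b i)) = ⇑D := by
    funext i
    have hDc : D i = (if i ∈ F then (0:H) else y (b i)) +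
        ∑ j ∈ F, (rk (y (b j)) (b j) (b i) - rk (A (u j)) (A (w j)) (b i)) := by
      have h1 : ⇑D = ⇑t + ∑ j ∈ F, ⇑(rkL2 b (y (b j)) (b j) - rkL2 b (A (u j)) (A (w j))) := by
        rw [hD, lp.coeFn_add, lp.coeFn_sum]
      have h2 := congrFun h1 i
      rw [h2]
      simp only [Pi.add_apply, Finset.sum_apply]
      congr 1
    rw [hDc]
    have hyT : (y - A * x * A) (b i) = y (b i) - ∑ j ∈ F, rk (A (u j)) (A (w j)) (b i) := by
      rw [ContinuousLinearMap.sub_apply, hT]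
    rw [hyT, Finset.sum_sub_distrib, hsum i]
    split <;> abel
  constructor
  · have hm : Memℓp (fun i => (y - A * x * A) (b i)) 2 := by
      rw [hDfun]; exact lp.memℓp D
    exact (memℓp_two_iff _).mp hm
  · have hrw : (∑' i, ‖(y - A * x * A) (b i)‖ ^ 2) = ∑' i, ‖D i‖ ^ 2 := by
      refine tsum_congr fun i => ?_
      rw [congrFun hDfun i]
    rw [hrw, sqrt_tsum_eq_norm]
    -- bound ‖t‖
    have htnorm : ‖t‖ < ε/4 := by
      have h1 : ∑' i, ‖t i‖ ^ 2 = ∑' (i : {x // x ∉ F}), ‖y (b (i : ι))‖ ^ 2 := by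
        have hb : ∀ i, ‖t i‖ ^ 2 = Set.indicator {x : ι | x ∉ F} (fun i => ‖y (b i)‖ ^ 2) i := by
          intro i
          rw [Set.indicator_apply]
          by_cases hi : i ∈ F <;> simp [ht, hi]
        rw [tsum_congr hb]
        exact (tsum_subtype {x : ι | x ∉ F} (fun i => ‖y (b i)‖ ^ 2)).symm
      have h2 : ‖t‖ = Real.sqrt (∑' i, ‖t i‖ ^ 2) := (sqrt_tsum_eq_norm t).symm
      rw [h2, h1]
      calc Real.sqrt (∑' (i : {x // x ∉ F}), ‖y (b (i : ι))‖ ^ 2)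
          < Real.sqrt ((ε/4) ^ 2) := by
            apply Real.sqrt_lt_sqrt (tsum_nonneg fun i => by positivity) hF
        _ = ε/4 := Real.sqrt_sq (by positivity)
    -- bound each rank-one error
    have herr : ∀ j ∈ F, ‖rkL2 b (y (b j)) (b j) - rkL2 b (A (u j)) (A (w j))‖
        ≤ ε / (4 * (n+1)) := by
      intro j _
      have hbj : ‖b j‖ = 1 := b.orthonormal.1 j
      have hδ1 : δ j ≤ 1 := min_le_left _ _
      have hδ2 : δ j ≤ ε / (4 * (n+1) * (‖y (b j)‖ + 2)) := min_le_right _ _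
      have hcj : (0:ℝ) < ‖y (b j)‖ + 2 := by positivity
      have hkey : δ j * (‖y (b j)‖ + 2) ≤ ε / (4 * (n+1)) := by
        have h := mul_le_mul_of_nonneg_right hδ2 hcj.le
        have heq : ε / (4 * (n+1) * (‖y (b j)‖ + 2)) * (‖y (b j)‖ + 2) = ε / (4 * (n+1)) := by
          field_simp
        rwa [heq] at h
      have hu' : ‖y (b j) - A (u j)‖ ≤ δ j := by
        rw [norm_sub_rev]; exact (hu j).le
      have hw' : ‖b j - A (w j)‖ ≤ δ j := by
        rw [norm_sub_rev]; exact (hw j).le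
      have hAu : ‖A (u j)‖ ≤ ‖y (b j)‖ + 1 := by
        have h := norm_sub_norm_le (A (u j)) (y (b j))
        have := (hu j).le
        linarith [hδ1]
      rw [rkL2_sub]
      calc ‖rkL2 b (y (b j) - A (u j)) (b j) + rkL2 b (A (u j)) (b j - A (w j))‖
          ≤ ‖rkL2 b (y (b j) - A (u j)) (b j)‖ + ‖rkL2 b (A (u j)) (b j - A (w j))‖ :=
            norm_add_le _ _
        _ = ‖y (b j) - A (u j)‖ * ‖b j‖ + ‖A (u j)‖ * ‖b j - A (w j)‖ := by
            rw [rkL2_norm, rkL2_norm]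
        _ ≤ δ j * 1 + (‖y (b j)‖ + 1) * δ j := by
            refine add_le_add ?_ ?_
            · rw [hbj]; exact mul_le_mul_of_nonneg_right hu' (by norm_num)
            · exact mul_le_mul hAu hw' (norm_nonneg _) (by positivity)
        _ = δ j * (‖y (b j)‖ + 2) := by ring
        _ ≤ ε / (4 * (n+1)) := hkey
    -- total bound
    have hsumnorm : ‖∑ j ∈ F, (rkL2 b (y (b j)) (b j) - rkL2 b (A (u j)) (A (w j)))‖
        ≤ ε/4 := by
      calc ‖∑ j ∈ F, (rkL2 b (y (b j)) (b j) - rkL2 b (A (u j)) (A (w j)))‖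
          ≤ ∑ j ∈ F, ‖rkL2 b (y (b j)) (b j) - rkL2 b (A (u j)) (A (w j))‖ :=
            norm_sum_le _ _
        _ ≤ ∑ _j ∈ F, ε / (4 * (n+1)) := Finset.sum_le_sum herr
        _ = n * (ε / (4 * (n+1))) := by rw [Finset.sum_const, nsmul_eq_mul, hn]
        _ ≤ ε/4 := by
            have he : n * (ε / (4 * (n+1))) = ε * n / (4*(n+1)) := by ring
            rw [he, div_le_div_iff₀ (by positivity) (by norm_num : (0:ℝ) < 4)]
            nlinarith [hε.le, hn0]
    calc ‖D‖ ≤ ‖t‖ + ‖∑ j ∈ F, (rkL2 b (y (b j)) (b j) - rkL2 b (A (u j)) (A (w j)))‖ :=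
          norm_add_le _ _
      _ < ε/4 + ε/4 := by
          have := htnorm
          linarith [hsumnorm]
      _ < ε := by linarith
end

section
/- Let H be a Hilbert space, ρ a positive trace-class operator, and T : B(H) → B(H) a bounded linear Schwarz map (i.e., T(x)*T(x) ≤ T(x*x) for all x) such that Tr(ρ T(a)) ≤ Tr(ρ a) for all positive a ∈ B(H). Then for every x ∈ B(H), ‖T(x) ρ^{1/2}‖₂ ≤ ‖x ρ^{1/2}‖₂; i.e., the map x ρ^{1/2} ↦ T(x) ρ^{1/2} is a contraction on the subspace {x ρ^{1/2} : x ∈ B(H)} of S₂(H). -/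
set_option synthInstance.maxHeartbeats 1000000
set_option maxHeartbeats 1000000

open scoped InnerProductSpace ComplexOrder

section Aux

variable {ι H : Type*} [NormedAddCommGroup H] [InnerProductSpace ℂ H] [CompleteSpace H]

/-- Parseval identity for a Hilbert basis, squared-norm form. -/
lemma aux_parseval (b : HilbertBasis ι ℂ H) (v : H) :
    HasSum (fun i => ‖⟪b i, v⟫_ℂ‖ ^ 2) (‖v‖ ^ 2) := by
  have h := Complex.hasSum_re (b.hasSum_inner_mul_inner v v)
  have h1 : ∀ i, (⟪v, b i⟫_ℂ * ⟪b i, v⟫_ℂ).re = ‖⟪b i, v⟫_ℂ‖ ^ 2 := by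
    intro i
    set z := ⟪b i, v⟫_ℂ with hz_def
    have hz : ⟪v, b i⟫_ℂ = (starRingEnd ℂ) z := (inner_conj_symm v (b i)).symm
    rw [hz, mul_comm, Complex.mul_conj]
    simp only [Complex.normSq_eq_norm_sq]
    norm_cast
  have h2 : (⟪v, v⟫_ℂ).re = ‖v‖ ^ 2 := by
    simpa using inner_self_eq_norm_sq (𝕜 := ℂ) v
  rw [h2] at h
  simpa [h1] using h

/-- Summability of the matrix-coefficient square norms of a Hilbert-Schmidt operator. -/
lemma aux_prod_summable (b : HilbertBasis ι ℂ H) (u : H →L[ℂ] H)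
    (hu : Summable fun i => ‖u (b i)‖ ^ 2) :
    Summable fun p : ι × ι => ‖⟪b p.2, u (b p.1)⟫_ℂ‖ ^ 2 := by
  refine (summable_prod_of_nonneg fun p => by positivity).2 ⟨fun i =>
    (aux_parseval b (u (b i))).summable, ?_⟩
  exact hu.congr fun i => ((aux_parseval b (u (b i))).tsum_eq).symm

/-- If `u` is Hilbert-Schmidt with respect to `b`, so is `star u`. -/
lemma aux_hs_star (b : HilbertBasis ι ℂ H) (u : H →L[ℂ] H)
    (hu : Summable fun i => ‖u (b i)‖ ^ 2) :
    Summable fun i => ‖(star u) (b i)‖ ^ 2 := by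
  have hprod := aux_prod_summable b u hu
  have hswap : Summable fun p : ι × ι => ‖⟪b p.2, (star u) (b p.1)⟫_ℂ‖ ^ 2 := by
    have h := (Equiv.prodComm ι ι).summable_iff.2 hprod
    refine h.congr fun p => ?_
    have : ⟪b p.2, (star u) (b p.1)⟫_ℂ = ⟪u (b p.2), b p.1⟫_ℂ := by
      rw [ContinuousLinearMap.star_eq_adjoint, ContinuousLinearMap.adjoint_inner_right]
    simp only [Equiv.prodComm_apply, Function.comp_apply, Prod.snd_swap, Prod.fst_swap]
    rw [this, norm_inner_symm]
  have h2 := ((summable_prod_of_nonneg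
      (fun p : ι × ι => by positivity)).1 hswap).2
  refine h2.congr fun i => ?_
  exact (aux_parseval b ((star u) (b i))).tsum_eq

/-- The key "cyclicity" identity: for a self-adjoint Hilbert-Schmidt `s` and any `y`
with `s * y` Hilbert-Schmidt, `Tr (s * (s * y)) = Tr (s * y * s)` in basis form. -/
lemma aux_bridge (b : HilbertBasis ι ℂ H) (s y : H →L[ℂ] H)
    (hsa : IsSelfAdjoint s) (hHS : Summable fun i => ‖s (b i)‖ ^ 2)
    (hA : Summable fun i => ‖(s * y) (b i)‖ ^ 2) :
    (∑' i, ⟪b i, (s * (s * y)) (b i)⟫_ℂ) = ∑' i, ⟪s (b i), y (s (b i))⟫_ℂ := by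
  set A := s * y with hA_def
  have hsym : ∀ v w, ⟪s v, w⟫_ℂ = ⟪v, s w⟫_ℂ := fun v w =>
    (ContinuousLinearMap.isSelfAdjoint_iff_isSymmetric.mp hsa) v w
  set F : ι → ι → ℂ := fun i j => ⟪s (b i), b j⟫_ℂ * ⟪b j, A (b i)⟫_ℂ with hF_def
  have hrow : ∀ i, HasSum (F i) ⟪s (b i), A (b i)⟫_ℂ := fun i =>
    b.hasSum_inner_mul_inner (s (b i)) (A (b i))
  have hcol : ∀ j, HasSum (fun i => F i j)
      ⟪(ContinuousLinearMap.adjoint A) (b j), s (b j)⟫_ℂ := by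
    intro j
    have heq : ∀ i, F i j
        = ⟪(ContinuousLinearMap.adjoint A) (b j), b i⟫_ℂ * ⟪b i, s (b j)⟫_ℂ := by
      intro i
      show ⟪s (b i), b j⟫_ℂ * ⟪b j, A (b i)⟫_ℂ = _
      rw [← ContinuousLinearMap.adjoint_inner_left A, hsym (b i) (b j), mul_comm]
    simpa [heq] using
      b.hasSum_inner_mul_inner ((ContinuousLinearMap.adjoint A) (b j)) (s (b j))
  -- summability of the double family
  have hGs := aux_prod_summable b s hHS
  have hGA := aux_prod_summable b A hA
  have hsum2 : Summable (fun p : ι × ι =>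
      (‖⟪b p.2, s (b p.1)⟫_ℂ‖ ^ 2 + ‖⟪b p.2, A (b p.1)⟫_ℂ‖ ^ 2) / 2) :=
    (hGs.add hGA).div_const 2
  have huncurry : Summable (Function.uncurry F) := by
    refine Summable.of_norm (Summable.of_nonneg_of_le (fun p => norm_nonneg _)
      (fun p => ?_) hsum2)
    have h1 : ‖Function.uncurry F p‖
        = ‖⟪b p.2, s (b p.1)⟫_ℂ‖ * ‖⟪b p.2, A (b p.1)⟫_ℂ‖ := by
      show ‖⟪s (b p.1), b p.2⟫_ℂ * ⟪b p.2, A (b p.1)⟫_ℂ‖ = _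
      rw [norm_mul, norm_inner_symm]
    rw [h1]
    nlinarith [sq_nonneg (‖⟪b p.2, s (b p.1)⟫_ℂ‖ - ‖⟪b p.2, A (b p.1)⟫_ℂ‖),
      norm_nonneg (⟪b p.2, s (b p.1)⟫_ℂ), norm_nonneg (⟪b p.2, A (b p.1)⟫_ℂ)]
  calc (∑' i, ⟪b i, (s * A) (b i)⟫_ℂ)
      = ∑' i, ⟪s (b i), A (b i)⟫_ℂ := by
        refine tsum_congr fun i => ?_
        rw [ContinuousLinearMap.mul_apply, ← hsym]
    _ = ∑' i, ∑' j, F i j := tsum_congr fun i => (hrow i).tsum_eq.symm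
    _ = ∑' j, ∑' i, F i j :=
        (Summable.tsum_comm' huncurry (fun i => (hrow i).summable)
          (fun j => (hcol j).summable)).symm
    _ = ∑' j, ⟪(ContinuousLinearMap.adjoint A) (b j), s (b j)⟫_ℂ :=
        tsum_congr fun j => (hcol j).tsum_eq
    _ = ∑' j, ⟪s (b j), y (s (b j))⟫_ℂ := by
        refine tsum_congr fun j => ?_
        rw [ContinuousLinearMap.adjoint_inner_left, hA_def,
          ContinuousLinearMap.mul_apply, hsym]

end Aux

/-- Let `H` be a Hilbert space, `ρ` a positive trace-class operator, and
`T : B(H) → B(H)` a bounded linear Schwarz map (`T(x)* T(x) ≤ T(x* x)`) such that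
`Tr(ρ T(a)) ≤ Tr(ρ a)` for all positive `a`.  Then for every `x ∈ B(H)`,
`‖T(x) ρ^{1/2}‖₂ ≤ ‖x ρ^{1/2}‖₂`, i.e. `x ρ^{1/2} ↦ T(x) ρ^{1/2}` is a contraction
on the subspace `{x ρ^{1/2} : x ∈ B(H)}` of `S₂(H)`.  Traces and Hilbert-Schmidt
norms are computed with respect to a Hilbert basis `b`. -/
theorem schwarz_contraction_on_S2
    {ι H : Type*} [NormedAddCommGroup H] [InnerProductSpace ℂ H] [CompleteSpace H]
    (b : HilbertBasis ι ℂ H) (ρ : H →L[ℂ] H) (hρpos : 0 ≤ ρ)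
    (htc : Summable fun i => ⟪b i, ρ (b i)⟫_ℂ)
    (T : (H →L[ℂ] H) →L[ℂ] (H →L[ℂ] H))
    (hSchwarz : ∀ x : H →L[ℂ] H, star (T x) * T x ≤ T (star x * x))
    (htsum : ∀ x : H →L[ℂ] H, Summable fun i => ⟪b i, (ρ * x) (b i)⟫_ℂ)
    (hsub : ∀ a : H →L[ℂ] H, 0 ≤ a →
      (∑' i, ⟪b i, (ρ * T a) (b i)⟫_ℂ) ≤ ∑' i, ⟪b i, (ρ * a) (b i)⟫_ℂ)
    (x : H →L[ℂ] H) :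
    (Summable fun i => ‖(T x * CFC.sqrt ρ) (b i)‖ ^ 2)
      ∧ (Summable fun i => ‖(x * CFC.sqrt ρ) (b i)‖ ^ 2)
      ∧ Real.sqrt (∑' i, ‖(T x * CFC.sqrt ρ) (b i)‖ ^ 2)
          ≤ Real.sqrt (∑' i, ‖(x * CFC.sqrt ρ) (b i)‖ ^ 2) := by
  set s := CFC.sqrt ρ with hs_def
  have hs2 : s * s = ρ := CFC.sqrt_mul_sqrt_self ρ hρpos
  have hspos : (0 : H →L[ℂ] H) ≤ s := CFC.sqrt_nonneg ρ
  have hsa : IsSelfAdjoint s := IsSelfAdjoint.of_nonneg hspos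
  have hsym : ∀ v w, ⟪s v, w⟫_ℂ = ⟪v, s w⟫_ℂ := fun v w =>
    (ContinuousLinearMap.isSelfAdjoint_iff_isSymmetric.mp hsa) v w
  -- s is Hilbert-Schmidt
  have hHS : Summable fun i => ‖s (b i)‖ ^ 2 := by
    have h := (Complex.hasSum_re htc.hasSum).summable
    refine h.congr fun i => ?_
    have : ⟪b i, ρ (b i)⟫_ℂ = ((‖s (b i)‖ ^ 2 : ℝ) : ℂ) := by
      rw [← hs2, ContinuousLinearMap.mul_apply, ← hsym, inner_self_eq_norm_sq_to_K]
      norm_cast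
    rw [this, Complex.ofReal_re]
  -- a * s is Hilbert-Schmidt for any bounded a  (left multiplication)
  have hHSl : ∀ a : H →L[ℂ] H, Summable fun i => ‖(a * s) (b i)‖ ^ 2 := by
    intro a
    refine Summable.of_nonneg_of_le (fun i => by positivity) (fun i => ?_)
      (hHS.mul_left (‖a‖ ^ 2))
    rw [ContinuousLinearMap.mul_apply, ← mul_pow]
    exact pow_le_pow_left₀ (norm_nonneg _) (a.le_opNorm _) 2
  -- s * y is Hilbert-Schmidt for any bounded y (right multiplication via star)
  have hHSr : ∀ y : H →L[ℂ] H, Summable fun i => ‖(s * y) (b i)‖ ^ 2 := by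
    intro y
    have h1 : Summable fun i => ‖(star y * s) (b i)‖ ^ 2 := hHSl (star y)
    have h2 := aux_hs_star b (star y * s) h1
    refine h2.congr fun i => ?_
    rw [star_mul, hsa.star_eq, star_star]
  -- the bridge: trace against ρ equals the twisted sum
  have bridge : ∀ y : H →L[ℂ] H,
      (∑' i, ⟪b i, (ρ * y) (b i)⟫_ℂ) = ∑' i, ⟪s (b i), y (s (b i))⟫_ℂ := by
    intro y
    have := aux_bridge b s y hsa hHS (hHSr y)
    rwa [← mul_assoc, hs2] at this
  -- summability of the twisted sums
  have hsummInner : ∀ y : H →L[ℂ] H,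
      Summable fun i => ⟪s (b i), y (s (b i))⟫_ℂ := by
    intro y
    refine Summable.of_norm (Summable.of_nonneg_of_le (fun i => norm_nonneg _)
      (fun i => ?_) (hHS.mul_left ‖y‖))
    calc ‖⟪s (b i), y (s (b i))⟫_ℂ‖ ≤ ‖s (b i)‖ * ‖y (s (b i))‖ :=
          norm_inner_le_norm _ _
      _ ≤ ‖s (b i)‖ * (‖y‖ * ‖s (b i)‖) := by
          have := y.le_opNorm (s (b i))
          have h0 : (0:ℝ) ≤ ‖s (b i)‖ := norm_nonneg _
          nlinarith
      _ = ‖y‖ * ‖s (b i)‖ ^ 2 := by ring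
  -- pointwise values : twisted sums of star a * a are squared norms
  have hval : ∀ (a : H →L[ℂ] H) (i : ι),
      ⟪s (b i), (star a * a) (s (b i))⟫_ℂ = ((‖(a * s) (b i)‖ ^ 2 : ℝ) : ℂ) := by
    intro a i
    rw [ContinuousLinearMap.mul_apply, ContinuousLinearMap.star_eq_adjoint,
      ContinuousLinearMap.adjoint_inner_right, inner_self_eq_norm_sq_to_K,
      ContinuousLinearMap.mul_apply]
    norm_cast
  -- monotonicity of the quadratic form in the Loewner order
  have hmono : ∀ (c d : H →L[ℂ] H), c ≤ d → ∀ v : H, ⟪v, c v⟫_ℂ ≤ ⟪v, d v⟫_ℂ := by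
    intro c d hcd v
    have he : (d - c).IsPositive := (ContinuousLinearMap.nonneg_iff_isPositive _).1
      (sub_nonneg.2 hcd)
    have hnn : (0 : ℂ) ≤ ⟪v, (d - c) v⟫_ℂ := by
      rw [Complex.le_def]
      constructor
      · exact (Complex.le_def.mp (he.inner_nonneg_right v)).1
      · have hsymm := (ContinuousLinearMap.isSelfAdjoint_iff_isSymmetric.mp he.isSelfAdjoint) v v
        have : (starRingEnd ℂ) ⟪v, (d - c) v⟫_ℂ = ⟪v, (d - c) v⟫_ℂ := by
          rw [inner_conj_symm]; exact hsymm
        simpa using (Complex.conj_eq_iff_im.mp this).symm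
    have heq : ⟪v, (d - c) v⟫_ℂ = ⟪v, d v⟫_ℂ - ⟪v, c v⟫_ℂ := by
      rw [ContinuousLinearMap.sub_apply, inner_sub_right]
    rw [heq] at hnn
    exact sub_nonneg.mp hnn
  -- the main chain of inequalities, in ℂ
  have hchain : (∑' i, ⟪s (b i), (star (T x) * T x) (s (b i))⟫_ℂ)
      ≤ ∑' i, ⟪s (b i), (star x * x) (s (b i))⟫_ℂ := by
    calc (∑' i, ⟪s (b i), (star (T x) * T x) (s (b i))⟫_ℂ)
        ≤ ∑' i, ⟪s (b i), (T (star x * x)) (s (b i))⟫_ℂ :=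
          Summable.tsum_le_tsum (fun i => hmono _ _ (hSchwarz x) _)
            (hsummInner _) (hsummInner _)
      _ = ∑' i, ⟪b i, (ρ * T (star x * x)) (b i)⟫_ℂ := (bridge _).symm
      _ ≤ ∑' i, ⟪b i, (ρ * (star x * x)) (b i)⟫_ℂ :=
          hsub (star x * x) (star_mul_self_nonneg x)
      _ = ∑' i, ⟪s (b i), (star x * x) (s (b i))⟫_ℂ := bridge _
  refine ⟨hHSl (T x), hHSl x, ?_⟩
  apply Real.sqrt_le_sqrt
  have h1 : (∑' i, ⟪s (b i), (star (T x) * T x) (s (b i))⟫_ℂ)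
      = ((∑' i, ‖(T x * s) (b i)‖ ^ 2 : ℝ) : ℂ) := by
    rw [Complex.ofReal_tsum]
    exact tsum_congr fun i => hval (T x) i
  have h2 : (∑' i, ⟪s (b i), (star x * x) (s (b i))⟫_ℂ)
      = ((∑' i, ‖(x * s) (b i)‖ ^ 2 : ℝ) : ℂ) := by
    rw [Complex.ofReal_tsum]
    exact tsum_congr fun i => hval x i
  rw [h1, h2] at hchain
  exact_mod_cast hchain
end

section
/- Let H be a Hilbert space and A a compact self-adjoint linear operator on the Hilbert space S₂(H). Then A satisfies A(a*) = (A(a))* for all a ∈ S₂(H) if and only if A admits a spectral decomposition A = Σ_n λ_n |x_n⟩⟨x_n| with all λ_n real and (x_n) an orthonormal basis of S₂(H) consisting of self-adjoint operators. -/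
open scoped InnerProductSpace ComplexOrder

open Filter Topology

section AuxSpectral
variable {F : Type*} [NormedAddCommGroup F] [InnerProductSpace ℂ F] [CompleteSpace F]

private lemma aux_polar (T : F →L[ℂ] F) (hsym : (T : F →ₗ[ℂ] F).IsSymmetric) (x y : F) :
    4 * Complex.re ⟪T x, y⟫_ℂ =
      Complex.re ⟪T (x + y), x + y⟫_ℂ - Complex.re ⟪T (x - y), x - y⟫_ℂ := by
  have h1 : ⟪T y, x⟫_ℂ = starRingEnd ℂ ⟪T x, y⟫_ℂ := by
    rw [hsym.apply_clm y x, inner_conj_symm]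
  have e1 : ⟪T (x + y), x + y⟫_ℂ = ⟪T x, x⟫_ℂ + ⟪T x, y⟫_ℂ + ⟪T y, x⟫_ℂ + ⟪T y, y⟫_ℂ := by
    simp only [map_add, inner_add_left, inner_add_right]; ring
  have e2 : ⟪T (x - y), x - y⟫_ℂ = ⟪T x, x⟫_ℂ - ⟪T x, y⟫_ℂ - ⟪T y, x⟫_ℂ + ⟪T y, y⟫_ℂ := by
    simp only [map_sub, inner_sub_left, inner_sub_right]; ring
  rw [e1, e2, h1]
  simp only [Complex.add_re, Complex.sub_re, Complex.conj_re]
  ring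

private lemma aux_norm_le (T : F →L[ℂ] F) (hsym : (T : F →ₗ[ℂ] F).IsSymmetric) {c : ℝ} (hc : 0 ≤ c)
    (h : ∀ z : F, |Complex.re ⟪T z, z⟫_ℂ| ≤ c * ‖z‖ ^ 2) : ‖T‖ ≤ c := by
  refine T.opNorm_le_bound hc (fun x => ?_)
  rcases eq_or_ne (T x) 0 with h0 | h0
  · simp [h0]; positivity
  rcases eq_or_ne x 0 with rfl | hx
  · simp at h0
  set y : F := (↑(‖x‖ / ‖T x‖) : ℂ) • T x with hy
  have hyn : ‖y‖ = ‖x‖ := by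
    rw [hy, norm_smul]
    rw [Complex.norm_real, Real.norm_eq_abs, abs_of_nonneg (by positivity)]
    rw [div_mul_cancel₀ _ (norm_ne_zero_iff.2 h0)]
  have hre : Complex.re ⟪T x, y⟫_ℂ = ‖x‖ * ‖T x‖ := by
    rw [hy, inner_smul_right]
    have hTT : (⟪T x, T x⟫_ℂ).re = ‖T x‖ ^ 2 := by
      rw [← RCLike.re_to_complex, inner_self_eq_norm_sq]
    rw [Complex.re_ofReal_mul, hTT]
    field_simp [norm_ne_zero_iff.2 h0]
  have hineq : Complex.re ⟪T x, y⟫_ℂ ≤ c * ‖x‖ ^ 2 := by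
    have hp := aux_polar T hsym x y
    have b1 := (abs_le.1 (h (x + y))).2
    have b2 := (neg_le_of_abs_le (h (x - y)))
    have par : ‖x + y‖ ^ 2 + ‖x - y‖ ^ 2 = 2 * (‖x‖ ^ 2 + ‖y‖ ^ 2) := by
      have := parallelogram_law_with_norm ℂ x y
      nlinarith [this]
    have key : 4 * Complex.re ⟪T x, y⟫_ℂ ≤ 4 * (c * ‖x‖ ^ 2) := by
      have e3 : c * ‖x + y‖ ^ 2 + c * ‖x - y‖ ^ 2 = 2 * c * (‖x‖ ^ 2 + ‖y‖ ^ 2) := by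
        linear_combination c * par
      rw [hyn] at e3
      linarith
    linarith
  rw [hre] at hineq
  nlinarith [hineq, norm_pos_iff.2 hx]

private lemma aux_eigen (T : F →L[ℂ] F) (hcmp : IsCompactOperator T) (hsa : IsSelfAdjoint T)
    (hT : T ≠ 0) : ∃ (μ : ℝ) (x : F), x ≠ 0 ∧ T x = (μ : ℂ) • x := by
  have hsym : (T : F →ₗ[ℂ] F).IsSymmetric :=
    ContinuousLinearMap.isSelfAdjoint_iff_isSymmetric.mp hsa
  have hTne : ‖T‖ ≠ 0 := fun h => hT ((ContinuousLinearMap.opNorm_zero_iff T).1 h)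
  have hTnorm : 0 < ‖T‖ := lt_of_le_of_ne (norm_nonneg _) (Ne.symm hTne)
  have hexists : ∀ ε : ℝ, 0 < ε → ∃ x : F, ‖x‖ = 1 ∧ ‖T‖ - ε < |Complex.re ⟪T x, x⟫_ℂ| := by
    intro ε hε
    by_contra hcon
    push_neg at hcon
    obtain ⟨v, hv⟩ : ∃ v, T v ≠ 0 := by
      by_contra h; push_neg at h; exact hT (ContinuousLinearMap.ext fun v => by simp [h v])
    have hv0 : v ≠ 0 := fun h => hv (by simp [h])
    have hvn : ‖(‖v‖⁻¹ : ℝ) • v‖ = 1 := by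
      rw [norm_smul, Real.norm_eq_abs, abs_of_nonneg (by positivity),
        inv_mul_cancel₀ (norm_ne_zero_iff.2 hv0)]
    have hcnn : 0 ≤ ‖T‖ - ε := le_trans (abs_nonneg _) (hcon _ hvn)
    have hall : ∀ z : F, |Complex.re ⟪T z, z⟫_ℂ| ≤ (‖T‖ - ε) * ‖z‖ ^ 2 := by
      intro z
      rcases eq_or_ne z 0 with rfl | hz
      · simp
      have hz1 : ‖(‖z‖⁻¹ : ℝ) • z‖ = 1 := by
        rw [norm_smul, Real.norm_eq_abs, abs_of_nonneg (by positivity),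
          inv_mul_cancel₀ (norm_ne_zero_iff.2 hz)]
      have h2 := hcon _ hz1
      have hscale : Complex.re ⟪T ((‖z‖⁻¹ : ℝ) • z), (‖z‖⁻¹ : ℝ) • z⟫_ℂ
          = ‖z‖⁻¹ * ‖z‖⁻¹ * Complex.re ⟪T z, z⟫_ℂ := by
        rw [RCLike.real_smul_eq_coe_smul (K := ℂ), map_smul, inner_smul_left,
          inner_smul_right, RCLike.conj_ofReal, ← mul_assoc]
        norm_cast
        exact Complex.re_ofReal_mul _ _
      rw [hscale] at h2
      rw [abs_mul, abs_of_nonneg (by positivity : (0:ℝ) ≤ ‖z‖⁻¹ * ‖z‖⁻¹)] at h2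
      have hzpos : 0 < ‖z‖ := norm_pos_iff.2 hz
      have := mul_le_mul_of_nonneg_left h2 (le_of_lt (by positivity : (0:ℝ) < ‖z‖ ^ 2))
      calc |Complex.re ⟪T z, z⟫_ℂ|
          = ‖z‖ ^ 2 * (‖z‖⁻¹ * ‖z‖⁻¹ * |Complex.re ⟪T z, z⟫_ℂ|) := by
            field_simp
        _ ≤ ‖z‖ ^ 2 * (‖T‖ - ε) := this
        _ = (‖T‖ - ε) * ‖z‖ ^ 2 := by ring
    have := aux_norm_le T hsym hcnn hall
    linarith
  choose xs hxs1 hxs2 using fun n : ℕ => hexists (1 / (n + 1)) (by positivity)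
  set μs : ℕ → ℝ := fun n => Complex.re ⟪T (xs n), xs n⟫_ℂ with hμs_def
  have habs_le : ∀ n, |μs n| ≤ ‖T‖ := by
    intro n
    have h1 : |μs n| ≤ ‖⟪T (xs n), xs n⟫_ℂ‖ := by
      simpa using Complex.abs_re_le_norm ⟪T (xs n), xs n⟫_ℂ
    have h2 : ‖⟪T (xs n), xs n⟫_ℂ‖ ≤ ‖T (xs n)‖ * ‖xs n‖ := norm_inner_le_norm _ _
    have h3 : ‖T (xs n)‖ ≤ ‖T‖ * ‖xs n‖ := T.le_opNorm _
    rw [hxs1 n] at h2 h3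
    simpa using h1.trans (h2.trans (by simpa using h3))
  have hbd : ∀ n, μs n ∈ Set.Icc (-‖T‖) ‖T‖ := fun n => abs_le.1 (habs_le n)
  obtain ⟨μ, -, φ, hφ, hμlim⟩ :=
    tendsto_subseq_of_bounded (Metric.isBounded_Icc (-‖T‖) ‖T‖) hbd
  have hsq : Tendsto (fun n : ℕ => ‖T‖ - 1 / (φ n + 1)) atTop (𝓝 ‖T‖) := by
    have h0 : Tendsto (fun n : ℕ => 1 / ((φ n : ℝ) + 1)) atTop (𝓝 0) :=
      tendsto_one_div_add_atTop_nhds_zero_nat.comp hφ.tendsto_atTop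
    simpa using tendsto_const_nhds.sub h0
  have habs_lim : Tendsto (fun n => |μs (φ n)|) atTop (𝓝 |μ|) := hμlim.abs
  have habs : |μ| = ‖T‖ := by
    refine tendsto_nhds_unique habs_lim
      (tendsto_of_tendsto_of_tendsto_of_le_of_le hsq tendsto_const_nhds
        (fun n => le_of_lt (hxs2 (φ n))) (fun n => habs_le (φ n)))
  have hμ0 : μ ≠ 0 := by
    intro h
    rw [h, abs_zero] at habs
    exact hTne habs.symm
  have hμC : (μ : ℂ) ≠ 0 := by exact_mod_cast hμ0
  -- ‖T xₙ - μ xₙ‖² → 0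
  have hnorm_sq : ∀ n, ‖T (xs (φ n)) - (μ : ℂ) • xs (φ n)‖ ^ 2 ≤ 2 * μ ^ 2 - 2 * μ * μs (φ n) := by
    intro n
    have hexp := @norm_sub_sq ℂ _ _ _ _ (T (xs (φ n))) ((μ : ℂ) • xs (φ n))
    have hre : RCLike.re ⟪T (xs (φ n)), (μ : ℂ) • xs (φ n)⟫_ℂ = μ * μs (φ n) := by
      rw [inner_smul_right]
      have : ((μ : ℂ) * ⟪T (xs (φ n)), xs (φ n)⟫_ℂ).re = μ * μs (φ n) :=
        Complex.re_ofReal_mul _ _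
      exact this
    have hnsmul : ‖(μ : ℂ) • xs (φ n)‖ ^ 2 = μ ^ 2 := by
      rw [norm_smul, hxs1, mul_one, Complex.norm_real, Real.norm_eq_abs, sq_abs]
    have hTn : ‖T (xs (φ n))‖ ^ 2 ≤ μ ^ 2 := by
      have := T.le_opNorm (xs (φ n))
      rw [hxs1, mul_one, ← habs] at this
      nlinarith [norm_nonneg (T (xs (φ n))), abs_nonneg μ, sq_abs μ, this]
    rw [hexp, hre, hnsmul]
    linarith
  have hkey : Tendsto (fun n => T (xs (φ n)) - (μ : ℂ) • xs (φ n)) atTop (𝓝 0) := by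
    rw [tendsto_zero_iff_norm_tendsto_zero]
    have hub : Tendsto (fun n => 2 * μ ^ 2 - 2 * μ * μs (φ n)) atTop (𝓝 0) := by
      have hμφ : Tendsto (fun n => μs (φ n)) atTop (𝓝 μ) := hμlim
      have h6 := (tendsto_const_nhds (x := 2 * μ ^ 2) (f := atTop)).sub
        (hμφ.const_mul (2 * μ))
      have h7 : 2 * μ ^ 2 - 2 * μ * μ = 0 := by ring
      rw [h7] at h6
      exact h6
    have hsq0 : Tendsto (fun n => ‖T (xs (φ n)) - (μ : ℂ) • xs (φ n)‖ ^ 2) atTop (𝓝 0) :=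
      tendsto_of_tendsto_of_tendsto_of_le_of_le tendsto_const_nhds hub
        (fun n => by positivity) hnorm_sq
    have h8 := (Real.continuous_sqrt.tendsto 0).comp hsq0
    simp only [Function.comp_def, Real.sqrt_zero] at h8
    exact h8.congr (fun n => Real.sqrt_sq (norm_nonneg _))
  obtain ⟨K, hK, hKsub⟩ := hcmp.image_closedBall_subset_compact (𝕜₁ := ℂ)
    (f := (T : F →ₗ[ℂ] F)) 1
  have hmem : ∀ n, T (xs (φ n)) ∈ K := fun n =>
    hKsub ⟨xs (φ n), by simp [Metric.mem_closedBall, hxs1], rfl⟩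
  obtain ⟨y, -, ψ, hψ, hy⟩ := hK.tendsto_subseq hmem
  have h2 : Tendsto (fun n => (μ : ℂ) • xs (φ (ψ n))) atTop (𝓝 y) := by
    have := hy.sub (hkey.comp hψ.tendsto_atTop)
    simpa using this
  set x : F := (μ : ℂ)⁻¹ • y with hx_def
  have hx : Tendsto (fun n => xs (φ (ψ n))) atTop (𝓝 x) := by
    exact (h2.const_smul ((μ : ℂ)⁻¹)).congr (fun n => inv_smul_smul₀ hμC _)
  have hxn : ‖x‖ = 1 := by
    have h3 : Tendsto (fun n => ‖xs (φ (ψ n))‖) atTop (𝓝 ‖x‖) := hx.norm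
    have h4 : Tendsto (fun n => ‖xs (φ (ψ n))‖) atTop (𝓝 1) := by
      simpa [hxs1] using (tendsto_const_nhds : Tendsto (fun _ : ℕ => (1:ℝ)) atTop (𝓝 1))
    exact tendsto_nhds_unique h3 h4
  have hx0 : x ≠ 0 := fun h => by simp [h] at hxn
  have hTx : T x = (μ : ℂ) • x := by
    have hA : Tendsto (fun n => T (xs (φ (ψ n)))) atTop (𝓝 (T x)) :=
      (T.continuous.tendsto x).comp hx
    have hTxy : T x = y := tendsto_nhds_unique hA hy
    rw [hTxy, hx_def, smul_smul, mul_inv_cancel₀ hμC, one_smul]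
  exact ⟨μ, x, hx0, hTx⟩

end AuxSpectral

/-- (Spectral decomposition of star-preserving compact self-adjoint operators on
`S₂(H)`.)  Let `E` be a complex Hilbert space equipped with a conjugation `J`
(a conjugate-linear involution with `⟪J a, J b⟫ = ⟪b, a⟫`; for `E = S₂(H)` this is
the adjoint operation `a ↦ a*`, and `J a = a` means that `a` is a self-adjoint
operator).  Let `A` be a compact self-adjoint operator on `E`.  Then `A` commutes
with `J` (i.e. `A(a*) = (A(a))*` for all `a`) if and only if `A = ∑ λ_n |x_n⟩⟨x_n|`
for some real numbers `λ_n` and a Hilbert basis `(x_n)` of `E` consisting of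
`J`-fixed (self-adjoint) elements. -/
theorem star_preserving_iff_selfadjoint_eigenbasis
    {E : Type*} [NormedAddCommGroup E] [InnerProductSpace ℂ E] [CompleteSpace E]
    (J : E → E)
    (hJadd : ∀ a c : E, J (a + c) = J a + J c)
    (hJsmul : ∀ (μ : ℂ) (a : E), J (μ • a) = (starRingEnd ℂ) μ • J a)
    (hJinv : Function.Involutive J)
    (hJinner : ∀ a c : E, ⟪J a, J c⟫_ℂ = ⟪c, a⟫_ℂ)
    (A : E →L[ℂ] E) (hA : IsCompactOperator A) (hsa : IsSelfAdjoint A) :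
    (∀ a : E, A (J a) = J (A a)) ↔
      ∃ (s : Set E) (x : HilbertBasis s ℂ E) (μ : s → ℝ),
        (∀ i : s, J (x i) = x i)
          ∧ ∀ v : E, A v = ∑' i : s, μ i • (⟪x i, v⟫_ℂ • x i) := by
  classical
  -- basic facts about J
  have hJ0 : J 0 = 0 := by
    have := hJsmul 0 0
    simpa using this
  have hJneg : ∀ a : E, J (-a) = -J a := by
    intro a
    have := hJsmul (-1) a
    simpa using this
  have hJsub : ∀ a c : E, J (a - c) = J a - J c := by
    intro a c
    rw [sub_eq_add_neg, hJadd, hJneg, sub_eq_add_neg]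
  have hJnorm : ∀ a : E, ‖J a‖ = ‖a‖ := by
    intro a
    have h := hJinner a a
    have h3 : (‖J a‖ : ℝ) ^ 2 = ‖a‖ ^ 2 := by
      rw [← inner_self_eq_norm_sq (𝕜 := ℂ), ← inner_self_eq_norm_sq (𝕜 := ℂ), h]
    rw [← Real.sqrt_sq (norm_nonneg (J a)), ← Real.sqrt_sq (norm_nonneg a), h3]
  have hJcont : Continuous J := by
    have : Isometry J := Isometry.of_dist_eq fun a b => by
      rw [dist_eq_norm, dist_eq_norm, ← hJsub, hJnorm]
    exact this.continuous
  have hsymA : (A : E →ₗ[ℂ] E).IsSymmetric :=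
    ContinuousLinearMap.isSelfAdjoint_iff_isSymmetric.mp hsa
  constructor
  · -- forward direction
    intro hcomm
    set P : Set E := {v | J v = v ∧ ∃ μ : ℝ, A v = (μ : ℂ) • v} with hP_def
    set 𝒮 : Set (Set E) := {t | t ⊆ P ∧ Orthonormal ℂ ((↑) : t → E)} with h𝒮_def
    obtain ⟨s, hs⟩ := zorn_subset 𝒮 (by
      intro c hc hchain
      refine ⟨⋃₀ c, ⟨?_, ?_⟩, fun t ht => Set.subset_sUnion_of_mem ht⟩
      · exact Set.sUnion_subset fun t ht => (hc ht).1
      · exact orthonormal_sUnion_of_directed hchain.directedOn fun t ht => (hc ht).2)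
    have hs𝒮 : s ∈ 𝒮 := hs.prop
    have hsP : s ⊆ P := hs𝒮.1
    have hson : Orthonormal ℂ ((↑) : s → E) := hs𝒮.2
    set W : Submodule ℂ E := (Submodule.span ℂ s)ᗮ with hW_def
    have hWmem : ∀ w : E, w ∈ W ↔ ∀ v ∈ s, ⟪v, w⟫_ℂ = 0 := by
      intro w
      rw [hW_def, Submodule.mem_orthogonal]
      constructor
      · exact fun h v hv => h v (Submodule.subset_span hv)
      · intro h u hu
        induction hu using Submodule.span_induction with
        | mem v hv => exact h v hv
        | zero => simp
        | add u v _ _ hu' hv' => rw [inner_add_left, hu', hv', add_zero]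
        | smul c u _ hu' => rw [inner_smul_left, hu', mul_zero]
    have hAW : ∀ w ∈ W, A w ∈ W := by
      intro w hw
      rw [hWmem]
      intro v hv
      obtain ⟨μv, hμv⟩ := (hsP hv).2
      rw [← hsymA.apply_clm v w, hμv, inner_smul_left, (hWmem w).1 hw v hv, mul_zero]
    have hJW : ∀ w ∈ W, J w ∈ W := by
      intro w hw
      rw [hWmem]
      intro v hv
      calc ⟪v, J w⟫_ℂ = ⟪J v, J w⟫_ℂ := by rw [(hsP hv).1]
        _ = ⟪w, v⟫_ℂ := hJinner v w
        _ = starRingEnd ℂ ⟪v, w⟫_ℂ := (inner_conj_symm w v).symm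
        _ = 0 := by rw [(hWmem w).1 hw v hv, map_zero]
    -- main claim : W = ⊥
    have hWbot : W = ⊥ := by
      by_contra hWne
      obtain ⟨w₀, hw₀W, hw₀⟩ := Submodule.exists_mem_ne_zero_of_ne_bot hWne
      -- construct an eigenvector u ∈ W
      have hex : ∃ (μ : ℝ) (u : E), u ∈ W ∧ u ≠ 0 ∧ A u = (μ : ℂ) • u := by
        set A' : W →L[ℂ] W := (A.comp W.subtypeL).codRestrict W
          (fun w => hAW _ w.2) with hA'_def
        have hA'apply : ∀ w : W, (A' w : E) = A w := fun w => rfl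
        rcases eq_or_ne A' 0 with h0 | h0
        · refine ⟨0, w₀, hw₀W, hw₀, ?_⟩
          have : (A' ⟨w₀, hw₀W⟩ : E) = A w₀ := rfl
          rw [h0] at this
          simpa using this.symm
        · have hA'c : IsCompactOperator A' := by
            obtain ⟨K, hK, hKmem⟩ := hA.comp_clm W.subtypeL
            exact ⟨Subtype.val ⁻¹' K,
              (Submodule.span ℂ s).isClosed_orthogonal.isClosedEmbedding_subtypeVal.isCompact_preimage hK, hKmem⟩
          have hA'sa : IsSelfAdjoint A' := by
            rw [ContinuousLinearMap.isSelfAdjoint_iff_isSymmetric]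
            intro x y
            have : ⟪(A' x : E), (y : E)⟫_ℂ = ⟪(x : E), (A' y : E)⟫_ℂ := by
              rw [hA'apply, hA'apply]
              exact hsymA.apply_clm (x : E) (y : E)
            exact this
          obtain ⟨μ, x', hx'0, hx'⟩ := aux_eigen A' hA'c hA'sa h0
          refine ⟨μ, (x' : E), x'.2, ?_, ?_⟩
          · simpa [Submodule.coe_eq_zero] using hx'0
          · have := congrArg (Subtype.val : W → E) hx'
            simpa [hA'apply] using this
      obtain ⟨μ, u, huW, hu0, hAu⟩ := hex
      have hAJu : A (J u) = (μ : ℂ) • J u := by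
        rw [hcomm, hAu, hJsmul, Complex.conj_ofReal]
      -- J-fixed eigenvectors a, b with a + I • b = u
      set av : E := (2⁻¹ : ℂ) • (u + J u) with hav_def
      set bv : E := (2 * Complex.I)⁻¹ • (u - J u) with hbv_def
      have hJa : J av = av := by
        rw [hav_def, hJsmul, hJadd, hJinv u]
        norm_num [map_ofNat, add_comm]
      have hconj2I : starRingEnd ℂ (2 * Complex.I)⁻¹ = -(2 * Complex.I)⁻¹ := by
        simp [Complex.conj_I, map_ofNat, mul_comm]
      have hJb : J bv = bv := by
        rw [hbv_def, hJsmul, hJsub, hJinv u, hconj2I, neg_smul, ← smul_neg, neg_sub]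
      have hAa : A av = (μ : ℂ) • av := by
        rw [hav_def, map_smul, map_add, hAu, hAJu, ← smul_add, smul_smul, smul_smul,
          mul_comm]
      have hAb : A bv = (μ : ℂ) • bv := by
        rw [hbv_def, map_smul, map_sub, hAu, hAJu, ← smul_sub, smul_smul, smul_smul,
          mul_comm]
      have haW : av ∈ W := W.smul_mem _ (W.add_mem huW (hJW u huW))
      have hbW : bv ∈ W := W.smul_mem _ (W.sub_mem huW (hJW u huW))
      have hab : av + Complex.I • bv = u := by
        rw [hav_def, hbv_def, smul_smul]
        have hcoef : Complex.I * (2 * Complex.I)⁻¹ = 2⁻¹ := by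
          field_simp [Complex.I_ne_zero]
        rw [hcoef, ← smul_add]
        have : u + J u + (u - J u) = (2 : ℂ) • u := by
          rw [two_smul]; abel
        rw [this, smul_smul]
        norm_num
      -- pick a nonzero one among av, bv
      obtain ⟨e, heW, heJ, heA, he0⟩ :
          ∃ e : E, e ∈ W ∧ J e = e ∧ A e = (μ : ℂ) • e ∧ e ≠ 0 := by
        rcases eq_or_ne av 0 with ha0 | ha0
        · refine ⟨bv, hbW, hJb, hAb, ?_⟩
          intro hb0
          rw [ha0, hb0, smul_zero, add_zero] at hab
          exact hu0 hab.symm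
        · exact ⟨av, haW, hJa, hAa, ha0⟩
      -- normalize
      set e' : E := ((‖e‖⁻¹ : ℝ) : ℂ) • e with he'_def
      have he'n : ‖e'‖ = 1 := by
        rw [he'_def, norm_smul, Complex.norm_real, Real.norm_eq_abs,
          abs_of_nonneg (by positivity), inv_mul_cancel₀ (norm_ne_zero_iff.2 he0)]
      have he'W : e' ∈ W := W.smul_mem _ heW
      have he'J : J e' = e' := by
        rw [he'_def, hJsmul, Complex.conj_ofReal, heJ]
      have he'A : A e' = (μ : ℂ) • e' := by
        rw [he'_def, map_smul, heA, smul_smul, smul_smul, mul_comm]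
      have he'P : e' ∈ P := ⟨he'J, μ, he'A⟩
      have he'0 : e' ≠ 0 := fun h => by simp [h] at he'n
      have he'orth : ∀ v ∈ s, ⟪v, e'⟫_ℂ = 0 := (hWmem e').1 he'W
      have he'ns : e' ∉ s := by
        intro hmem
        have := he'orth e' hmem
        rw [inner_self_eq_zero] at this
        exact he'0 this
      -- insert e' contradicts maximality
      have hins : insert e' s ∈ 𝒮 := by
        constructor
        · exact Set.insert_subset he'P hsP
        · rw [orthonormal_subtype_iff_ite]
          have hson' := hson
          rw [orthonormal_subtype_iff_ite] at hson'
          intro v hv w hw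
          rcases hv with rfl | hv
          · rcases hw with rfl | hw
            · simp only [if_pos rfl]
              rw [inner_self_eq_norm_sq_to_K, he'n]
              norm_num
            · rw [if_neg (fun h => he'ns (by rw [h]; exact hw))]
              rw [← inner_conj_symm, he'orth w hw, map_zero]
          · rcases hw with rfl | hw
            · rw [if_neg (fun h => he'ns (by rw [← h]; exact hv))]
              exact he'orth v hv
            · exact hson' v hv w hw
      have : e' ∈ s := by
        have hsub := hs.2 hins (Set.subset_insert e' s)
        exact hsub (Set.mem_insert e' s)
      exact he'ns this
    -- conclusion : build the Hilbert basis
    have hrange : (Submodule.span ℂ (Set.range ((↑) : s → E)))ᗮ = ⊥ := by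
      rw [Subtype.range_coe]
      exact hWbot
    set b : HilbertBasis s ℂ E := HilbertBasis.mkOfOrthogonalEqBot hson hrange with hb_def
    have hbcoe : ∀ i : s, b i = (i : E) := fun i => by
      rw [hb_def, HilbertBasis.coe_mkOfOrthogonalEqBot]
    have hμ : ∀ i : s, ∃ μ : ℝ, A (i : E) = (μ : ℂ) • (i : E) := fun i => (hsP i.2).2
    choose μf hμf using hμ
    refine ⟨s, b, μf, fun i => ?_, fun v => ?_⟩
    · rw [hbcoe i]
      exact (hsP i.2).1
    · have hrepr := b.hasSum_repr v
      have h2 := hrepr.mapL A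
      have hfun : (fun i : s => A (b.repr v i • b i))
          = fun i : s => μf i • (⟪b i, v⟫_ℂ • b i) := by
        funext i
        rw [map_smul, b.repr_apply_apply, hbcoe i, hμf i,
          ← Complex.coe_smul (μf i), smul_smul, smul_smul, mul_comm]
      rw [hfun] at h2
      exact h2.tsum_eq.symm
  · -- backward direction
    rintro ⟨s, x, μ, hfix, hdecomp⟩ a
    have key : ∀ i : s, ⟪x i, J a⟫_ℂ = starRingEnd ℂ ⟪x i, a⟫_ℂ := by
      intro i
      calc ⟪x i, J a⟫_ℂ = ⟪J (x i), J a⟫_ℂ := by rw [hfix i]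
        _ = ⟪a, x i⟫_ℂ := hJinner _ _
        _ = starRingEnd ℂ ⟪x i, a⟫_ℂ := (inner_conj_symm _ _).symm
    rw [hdecomp (J a), hdecomp a]
    set f : s → E := fun i => μ i • (⟪x i, a⟫_ℂ • x i) with hf_def
    have hJf : ∀ i : s, J (f i) = μ i • (⟪x i, J a⟫_ℂ • x i) := by
      intro i
      rw [hf_def]
      simp only
      rw [key i, RCLike.real_smul_eq_coe_smul (K := ℂ) (μ i), hJsmul, hJsmul,
        RCLike.conj_ofReal, hfix i, ← RCLike.real_smul_eq_coe_smul (K := ℂ)]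
    have hcongr : (fun i : s => μ i • (⟪x i, J a⟫_ℂ • x i)) = fun i => J (f i) :=
      funext fun i => (hJf i).symm
    rw [hcongr]
    by_cases hsum : Summable f
    · exact (hsum.hasSum.map (AddMonoidHom.mk' J hJadd) hJcont).tsum_eq
    · have hsum2 : ¬ Summable fun i => J (f i) := by
        intro h
        apply hsum
        have h2 := h.hasSum.map (AddMonoidHom.mk' J hJadd) hJcont
        have h3 : Summable fun i => J (J (f i)) := ⟨_, h2⟩
        exact h3.congr fun i => hJinv (f i)
      rw [tsum_eq_zero_of_not_summable hsum, tsum_eq_zero_of_not_summable hsum2, hJ0]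
end
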